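/- Let d > 1 and let F ∈ ℂ[x_0,x_1] and G ∈ ℂ[y_0,y_1] be binary forms of degree d in disjoint pairs of variables, each of Waring rank at least 3. If F + G = H_1^d + ⋯ + H_t^d for linear forms H_i ∈ ℂ[x_0,x_1,y_0,y_1], then the linear forms H_1,…,H_t span the full 4-dimensional space of linear forms in x_0,x_1,y_0,y_1; equivalently, no plane of ℙ^3 contains all the points [H_1],…,[H_t]. -/

import Mathlib

open MvPolynomial

/-- The Waring rank of a form `P` of degree `d`: the least `r` such that
`P = L₁^d + ⋯ + L_r^d` for some linear forms `L i`. -/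
noncomputable def waringRank {σ : Type*} (d : ℕ) (P : MvPolynomial σ ℂ) : ℕ :=
  sInf {r : ℕ | ∃ L : Fin r → MvPolynomial σ ℂ,
    (∀ i, (L i).IsHomogeneous 1) ∧ P = ∑ i, (L i) ^ d}

private lemma degree_one_single {σ : Type*} [DecidableEq σ] {m : σ →₀ ℕ}
    (hm : m.degree = 1) : ∃ k, m = Finsupp.single k 1 := by
  have hne : m.support.Nonempty := by
    rw [Finsupp.support_nonempty_iff]
    rintro rfl
    simp [map_zero] at hm
  obtain ⟨k, hk⟩ := hne
  refine ⟨k, ?_⟩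
  ext i
  rcases eq_or_ne i k with rfl | hik
  · simp only [Finsupp.single_eq_same]
    have h1 : 1 ≤ m i := Nat.one_le_iff_ne_zero.mpr (Finsupp.mem_support_iff.mp hk)
    have h2 : m i ≤ m.degree := Finsupp.le_degree i m
    omega
  · rw [Finsupp.single_eq_of_ne' (Ne.symm hik)]
    by_contra hmi
    have h1 : 1 ≤ m k := Nat.one_le_iff_ne_zero.mpr (Finsupp.mem_support_iff.mp hk)
    have hsub : ({i, k} : Finset σ) ⊆ m.support := by
      intro z hz
      simp only [Finset.mem_insert, Finset.mem_singleton] at hz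
      rcases hz with rfl | rfl
      · exact Finsupp.mem_support_iff.mpr hmi
      · exact hk
    have h2 : m i + m k ≤ m.degree := by
      calc m i + m k = ∑ z ∈ ({i, k} : Finset σ), m z := by rw [Finset.sum_pair hik]
        _ ≤ m.degree := Finset.sum_le_sum_of_subset hsub
    omega

private lemma degree_single_one {σ : Type*} (k : σ) :
    (Finsupp.single k 1 : σ →₀ ℕ).degree = 1 := by
  classical
  exact Finsupp.degree_single k 1

/-- A homogeneous polynomial of degree 1 is a linear combination of the variables. -/
private lemma homog_one_rep {σ : Type*} [Fintype σ] [DecidableEq σ]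
    (P : MvPolynomial σ ℂ) (hP : P.IsHomogeneous 1) :
    P = ∑ k, C (coeff (Finsupp.single k 1) P) * X k := by
  ext m
  rw [coeff_sum]
  simp only [coeff_C_mul, coeff_X']
  by_cases h1 : m.degree = 1
  · obtain ⟨k, rfl⟩ := degree_one_single h1
    rw [Finset.sum_eq_single k]
    · simp
    · intro k' _ hk'
      rw [if_neg, mul_zero]
      intro h
      exact hk' (by simpa using (Finsupp.single_left_injective one_ne_zero) h)
    · intro h
      exact absurd (Finset.mem_univ k) h
  · rw [hP.coeff_eq_zero h1]
    symm
    apply Finset.sum_eq_zero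
    intro k _
    rw [if_neg, mul_zero]
    rintro rfl
    exact h1 (degree_single_one k)

/-- Evaluation of a homogeneous degree-1 polynomial is linear in the point. -/
private lemma eval_homog_one {σ : Type*} [Fintype σ] [DecidableEq σ]
    (P : MvPolynomial σ ℂ) (hP : P.IsHomogeneous 1) (x y : σ → ℂ) (t : ℂ) :
    eval (x + t • y) P = eval x P + t * eval y P := by
  rw [homog_one_rep P hP]
  simp only [map_sum, map_mul, eval_C, eval_X, Pi.add_apply, Pi.smul_apply, smul_eq_mul]
  rw [Finset.mul_sum, ← Finset.sum_add_distrib]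
  apply Finset.sum_congr rfl
  intro k _
  ring

/-- Evaluation of a homogeneous polynomial at a scaled point. -/
private lemma eval_smul_homog {σ : Type*} {n : ℕ} (P : MvPolynomial σ ℂ)
    (hP : P.IsHomogeneous n) (t : ℂ) (x : σ → ℂ) :
    eval (t • x) P = t ^ n * eval x P := by
  rw [eval_eq, eval_eq, Finset.mul_sum]
  apply Finset.sum_congr rfl
  intro m hm
  have hdeg : m.degree = n := by
    have := hP (mem_support_iff.mp hm)
    rw [Finsupp.degree_eq_weight_one]; exact this
  have : ∏ i ∈ m.support, (t • x) i ^ m i = t ^ n * ∏ i ∈ m.support, x i ^ m i := by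
    calc ∏ i ∈ m.support, (t • x) i ^ m i
        = ∏ i ∈ m.support, (t ^ m i * x i ^ m i) := by
          apply Finset.prod_congr rfl; intro i _; simp [mul_pow]
      _ = (∏ i ∈ m.support, t ^ m i) * ∏ i ∈ m.support, x i ^ m i :=
          Finset.prod_mul_distrib
      _ = t ^ n * ∏ i ∈ m.support, x i ^ m i := by
          rw [Finset.prod_pow_eq_pow_sum]
          rw [show ∑ i ∈ m.support, m i = n from hdeg]
  rw [this]; ring

private lemma eval_zero_homog {σ : Type*} {n : ℕ} (hn : 0 < n) (P : MvPolynomial σ ℂ)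
    (hP : P.IsHomogeneous n) : eval 0 P = 0 := by
  have := eval_smul_homog P hP 0 0
  simpa [zero_pow hn.ne'] using this

/-- If a binary form satisfies `F(x + s a) = F(x) + s^d F(a)` for some `a` with a nonzero
coordinate, then it is a sum of two `d`-th powers of linear forms. -/
private lemma rank_le_two_of_translation (d : ℕ) (hd : 0 < d) (F : MvPolynomial (Fin 2) ℂ)
    (hF : F.IsHomogeneous d) (a : Fin 2 → ℂ) (i : Fin 2) (hai : a i ≠ 0)
    (key : ∀ (x : Fin 2 → ℂ) (s : ℂ), eval (x + s • a) F = eval x F + s ^ d * eval a F) :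
    waringRank d F ≤ 2 := by
  set jj : Fin 2 := 1 - i with hjj
  have hne : jj ≠ i := by fin_cases i <;> decide
  have hcov : ∀ k : Fin 2, k = i ∨ k = jj := by fin_cases i <;> decide
  obtain ⟨r1, hr1⟩ := IsAlgClosed.exists_pow_nat_eq (eval (Pi.single jj 1 : Fin 2 → ℂ) F) hd
  obtain ⟨r2, hr2⟩ := IsAlgClosed.exists_pow_nat_eq (eval a F) hd
  set L : Fin 2 → MvPolynomial (Fin 2) ℂ :=
    ![C r1 * (X jj - C (a jj / a i) * X i), C (r2 / a i) * X i] with hL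
  have hLhom : ∀ k, (L k).IsHomogeneous 1 := by
    intro k
    have h1 : (X jj - C (a jj / a i) * X i : MvPolynomial (Fin 2) ℂ).IsHomogeneous 1 := by
      refine (isHomogeneous_X _ _).sub ?_
      simpa using (isHomogeneous_C (Fin 2) (a jj / a i)).mul (isHomogeneous_X _ i)
    fin_cases k
    · simpa [hL] using (isHomogeneous_C (Fin 2) r1).mul h1
    · simpa [hL] using (isHomogeneous_C (Fin 2) (r2 / a i)).mul (isHomogeneous_X _ i)
  have hFeq : F = ∑ k, L k ^ d := by
    apply MvPolynomial.funext
    intro x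
    have hdecomp :
        x = (x jj - (x i / a i) * a jj) • (Pi.single jj (1 : ℂ) : Fin 2 → ℂ) + (x i / a i) • a := by
      funext k
      rcases hcov k with rfl | rfl
      · simp only [Pi.add_apply, Pi.smul_apply, smul_eq_mul,
          Pi.single_apply, if_neg (Ne.symm hne), mul_zero, zero_add]
        field_simp
      · simp only [Pi.add_apply, Pi.smul_apply, smul_eq_mul, Pi.single_eq_same, mul_one]
        ring
    have step1 : eval x F
        = (x jj - (x i / a i) * a jj) ^ d * eval (Pi.single jj 1 : Fin 2 → ℂ) F
          + (x i / a i) ^ d * eval a F := by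
      conv_lhs => rw [hdecomp]
      rw [key, eval_smul_homog F hF]
    rw [step1, Fin.sum_univ_two]
    simp only [hL, Matrix.cons_val_zero, Matrix.cons_val_one, Matrix.head_cons,
      map_add, map_pow, map_mul, map_sub, eval_C, eval_X]
    rw [← hr1, ← hr2, ← mul_pow, ← mul_pow]
    rw [show (x jj - x i / a i * a jj) * r1 = r1 * (x jj - a jj / a i * x i) by ring,
      show (x i / a i) * r2 = r2 / a i * x i by ring]
  exact Nat.sInf_le ⟨L, hLhom, hFeq⟩

/-- If binary forms `F, G` of rank at least 3 satisfy `F + G = ∑ Hᵢ^d`, then the linear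
forms `Hᵢ` span the whole 4-dimensional space of linear forms. -/
theorem stmt12 (d t : ℕ) (hd : 1 < d)
    (F G : MvPolynomial (Fin 2) ℂ)
    (hF : F.IsHomogeneous d) (hG : G.IsHomogeneous d)
    (hrF : 3 ≤ waringRank d F) (hrG : 3 ≤ waringRank d G)
    (H : Fin t → MvPolynomial (Fin 2 ⊕ Fin 2) ℂ)
    (hH1 : ∀ i, (H i).IsHomogeneous 1)
    (hsum : rename (Sum.inl : Fin 2 → Fin 2 ⊕ Fin 2) F +
        rename (Sum.inr : Fin 2 → Fin 2 ⊕ Fin 2) G = ∑ i, (H i) ^ d) :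
    ∀ j : Fin 2 ⊕ Fin 2,
      (X j : MvPolynomial (Fin 2 ⊕ Fin 2) ℂ) ∈ Submodule.span ℂ (Set.range H) := by
  have hd0 : 0 < d := by omega
  intro j
  by_contra hj
  obtain ⟨f, hfj, hf0⟩ :=
    Submodule.exists_dual_map_eq_bot_of_notMem hj inferInstance
  have hfH : ∀ i, f (H i) = 0 := by
    intro i
    have hmem : f (H i) ∈ Submodule.map f (Submodule.span ℂ (Set.range H)) :=
      Submodule.mem_map_of_mem (Submodule.subset_span ⟨i, rfl⟩)
    rw [hf0] at hmem
    exact (Submodule.mem_bot ℂ).mp hmem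
  set p : (Fin 2 ⊕ Fin 2) → ℂ := fun k => f (X k) with hpdef
  have keyf : ∀ P : MvPolynomial (Fin 2 ⊕ Fin 2) ℂ, P.IsHomogeneous 1 → eval p P = f P := by
    intro P hP
    conv_lhs => rw [homog_one_rep P hP]
    conv_rhs => rw [homog_one_rep P hP]
    rw [map_sum, map_sum]
    apply Finset.sum_congr rfl
    intro k _
    rw [map_mul, eval_C, eval_X, show (C (coeff (Finsupp.single k 1) P) * X k :
      MvPolynomial (Fin 2 ⊕ Fin 2) ℂ) = coeff (Finsupp.single k 1) P • X k from
      (MvPolynomial.smul_eq_C_mul _ _).symm, map_smul]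
    rfl
  have hpH : ∀ i, eval p (H i) = 0 := fun i => (keyf (H i) (hH1 i)).trans (hfH i)
  set a : Fin 2 → ℂ := fun k => p (Sum.inl k) with hadef
  set b : Fin 2 → ℂ := fun k => p (Sum.inr k) with hbdef
  -- the main functional identity
  have main : ∀ (x y : Fin 2 → ℂ) (s : ℂ),
      eval (x + s • a) F + eval (y + s • b) G = eval x F + eval y G := by
    intro x y s
    have e1 : ∀ (z : (Fin 2 ⊕ Fin 2) → ℂ) (s : ℂ),
        eval (z + s • p) (∑ i, (H i) ^ d) = eval z (∑ i, (H i) ^ d) := by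
      intro z s
      rw [map_sum, map_sum]
      apply Finset.sum_congr rfl
      intro i _
      rw [map_pow, map_pow, eval_homog_one (H i) (hH1 i), hpH i, mul_zero, add_zero]
    have e2 := e1 (Sum.elim x y) s
    rw [← hsum] at e2
    have c1 : (Sum.elim x y + s • p) ∘ Sum.inl = x + s • a := by
      funext k; rfl
    have c2 : (Sum.elim x y + s • p) ∘ Sum.inr = y + s • b := by
      funext k; rfl
    simpa [eval_rename, c1, c2, Sum.elim_comp_inl, Sum.elim_comp_inr] using e2
  have h0 : eval a F + eval b G = 0 := by
    have h1 := main 0 0 1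
    rw [show (0 : Fin 2 → ℂ) + (1 : ℂ) • a = a by simp,
      show (0 : Fin 2 → ℂ) + (1 : ℂ) • b = b by simp,
      eval_zero_homog hd0 F hF, eval_zero_homog hd0 G hG] at h1
    linear_combination h1
  have keyF : ∀ (x : Fin 2 → ℂ) (s : ℂ),
      eval (x + s • a) F = eval x F + s ^ d * eval a F := by
    intro x s
    have h1 := main x 0 s
    rw [show (0 : Fin 2 → ℂ) + s • b = s • b by simp,
      eval_smul_homog G hG, eval_zero_homog hd0 G hG] at h1
    linear_combination h1 - s ^ d * h0
  have keyG : ∀ (y : Fin 2 → ℂ) (s : ℂ),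
      eval (y + s • b) G = eval y G + s ^ d * eval b G := by
    intro y s
    have h1 := main 0 y s
    rw [show (0 : Fin 2 → ℂ) + s • a = s • a by simp,
      eval_smul_homog F hF, eval_zero_homog hd0 F hF] at h1
    linear_combination h1 - s ^ d * h0
  -- one of the two halves of `p` has a nonzero coordinate
  have hpj : p j ≠ 0 := hfj
  rcases j with j' | j'
  · have := rank_le_two_of_translation d hd0 F hF a j' hpj keyF
    omega
  · have := rank_le_two_of_translation d hd0 G hG b j' hpj keyG
    omega
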